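/- Let H = H_red ⊗ H_⊥ and Ĥ = Ĥ_red ⊗ 1 + 1 ⊗ Ĥ_⊥ on appropriate domains. If δ is a linear functional on a dense domain of H_⊥ that is not an eigenvector of the dual operator Ĥ_⊥*, then for every nonzero Ψ in the domain of Ĥ_red*, the dual vector Ĥ*(Ψ* ⊗ δ) is not of the form Φ* ⊗ δ for any Φ; i.e., the dual Hamiltonian maps every nonzero element of H_red* ⊗ δ out of H_red* ⊗ δ. -/
import Mathlib


/-- If `Ĥ = Ĥ_red ⊗ 1 + 1 ⊗ Ĥ_⊥` (acting on the algebraic tensor product of the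
dense domains `D_red`, `D_⊥`), and the linear functional `δ` on `D_⊥` is not an
eigenvector of the dual operator `Ĥ_⊥*`, then for every nonzero functional `Ψ*`
on `D_red`, the dual vector `Ĥ*(Ψ* ⊗ δ)`, i.e. the functional
`u ⊗ w ↦ Ψ*(Ĥ_red u) δ(w) + Ψ*(u) δ(Ĥ_⊥ w)`, is not of the form `Φ* ⊗ δ`
for any functional `Φ*`: the dual Hamiltonian maps every nonzero element of
`H_red* ⊗ δ` out of `H_red* ⊗ δ`. -/
theorem statement9 {Dred Dperp : Type*}
    [AddCommGroup Dred] [Module ℂ Dred] [AddCommGroup Dperp] [Module ℂ Dperp]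
    (Hred_op : Dred →ₗ[ℂ] Dred) (Hperp_op : Dperp →ₗ[ℂ] Dperp)
    (δ : Dperp →ₗ[ℂ] ℂ)
    (hδ : ¬ ∃ c : ℂ, ∀ w : Dperp, δ (Hperp_op w) = c * δ w)
    (Ψs : Dred →ₗ[ℂ] ℂ) (hΨs : Ψs ≠ 0) :
    ¬ ∃ Φs : Dred →ₗ[ℂ] ℂ, ∀ (u : Dred) (w : Dperp),
      Ψs (Hred_op u) * δ w + Ψs u * δ (Hperp_op w) = Φs u * δ w := by
  rintro ⟨Φs, h⟩
  obtain ⟨u, hu⟩ : ∃ u, Ψs u ≠ 0 := by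
    by_contra hc
    push_neg at hc
    exact hΨs (LinearMap.ext fun x => hc x)
  refine hδ ⟨(Φs u - Ψs (Hred_op u)) / Ψs u, fun w => ?_⟩
  have := h u w
  field_simp
  linear_combination this
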